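/- arXiv:2202.12771 — 2 statements merged into one kernel-verified Lean document; each statement's English description precedes it below -/
import Mathlib

section
/- Let n ≥ 2, B the open unit ball of ℝⁿ, and 0 < δ < 1. There exists a constant C ≥ 1 (depending only on δ) such that for all a, x, y ∈ B with ρ(x,y) < δ one has C⁻¹[y,a] ≤ [x,a] ≤ C[y,a]. -/
set_option maxHeartbeats 1000000


open MeasureTheory Filter Set
open scoped ENNReal NNReal Topology

noncomputable section

/-- Euclidean space ℝⁿ. -/
abbrev E (n : ℕ) := EuclideanSpace ℝ (Fin n)

/-- The open unit ball of ℝⁿ. -/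
def Bset (n : ℕ) : Set (E n) := Metric.ball 0 1

/-- The bracket `[x,y] = √(1 − 2 x·y + |x|²|y|²)`. -/
def br {n : ℕ} (x y : E n) : ℝ := Real.sqrt (1 - 2 * (inner ℝ x y : ℝ) + ‖x‖ ^ 2 * ‖y‖ ^ 2)

/-- The pseudohyperbolic distance `ρ(x,y) = |x − y|/[x,y]`. -/
def pd {n : ℕ} (x y : E n) : ℝ := ‖x - y‖ / br x y

/-- The pseudohyperbolic ball `E_δ(x) = {y ∈ B : ρ(x,y) < δ}`. -/
def Eball {n : ℕ} (δ : ℝ) (x : E n) : Set (E n) := {y | y ∈ Bset n ∧ pd x y < δ}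

/-- Lebesgue volume measure on ℝⁿ normalized so that `ν(B) = 1`. -/
def nu (n : ℕ) : Measure (E n) := (volume (Bset n))⁻¹ • volume

lemma br_id {n : ℕ} (x y : E n) :
    1 - 2 * (inner ℝ x y : ℝ) + ‖x‖ ^ 2 * ‖y‖ ^ 2
      = ‖x - y‖ ^ 2 + (1 - ‖x‖ ^ 2) * (1 - ‖y‖ ^ 2) := by
  rw [norm_sub_sq_real x y]; ring

lemma br_symm {n : ℕ} (x y : E n) : br x y = br y x := by
  unfold br; rw [real_inner_comm, mul_comm (‖x‖^2)]

lemma pd_symm {n : ℕ} (x y : E n) : pd x y = pd y x := by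
  unfold pd; rw [br_symm, norm_sub_rev]


lemma arith_key (c2 K M A B D t u v : ℝ) (hc2 : 0 ≤ c2) (hK : K = 2 + 4*c2)
    (hM : M = 8*c2*K + K + 2) (hD : 0 ≤ D) (hB : 0 ≤ B)
    (h2 : t ≤ c2 * (A * B)) (hAB : A ≤ K * B) (hBsq : B^2 ≤ 4*(v + B*D))
    (htri : u ≤ 2*t + 2*v) (hv : 0 ≤ v) :
    u + A*D ≤ M * (v + B*D) := by
  have hKpos : 0 ≤ K := by rw [hK]; linarith
  have f1 : t ≤ c2 * (K * (4 * (v + B*D))) := by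
    have s1 : A * B ≤ (K * B) * B := mul_le_mul_of_nonneg_right hAB hB
    have s3 : K * B^2 ≤ K * (4 * (v + B*D)) := mul_le_mul_of_nonneg_left hBsq hKpos
    have : A * B ≤ K * (4 * (v + B*D)) := by nlinarith
    exact h2.trans (mul_le_mul_of_nonneg_left this hc2)
  have f2 : A * D ≤ K * (v + B*D) := by
    have s1 : A * D ≤ (K * B) * D := mul_le_mul_of_nonneg_right hAB hD
    have s2 : K * (B * D) ≤ K * (v + B*D) := by
      apply mul_le_mul_of_nonneg_left _ hKpos; linarith
    nlinarith
  nlinarith [f1, f2, htri, hv, mul_nonneg hB hD]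

lemma half {n : ℕ} (δ : ℝ) (hδ0 : 0 < δ) (hδ1 : δ < 1)
    (a x y : E n) (ha : a ∈ Bset n) (hx : x ∈ Bset n) (hy : y ∈ Bset n)
    (hpd : pd x y < δ) :
    br x a ≤ Real.sqrt (8 * (δ^2/(1-δ^2)) * (2 + 4*(δ^2/(1-δ^2))) + (2 + 4*(δ^2/(1-δ^2))) + 2) * br y a := by
  set c2 : ℝ := δ^2/(1-δ^2) with hc2
  set K : ℝ := 2 + 4*c2 with hK
  have hδ2 : 0 < 1 - δ^2 := by nlinarith
  have hc2pos : 0 ≤ c2 := by positivity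
  have hKpos : 0 < K := by positivity
  have hna : ‖a‖ < 1 := by simpa [Bset, mem_ball_zero_iff] using ha
  have hnx : ‖x‖ < 1 := by simpa [Bset, mem_ball_zero_iff] using hx
  have hny : ‖y‖ < 1 := by simpa [Bset, mem_ball_zero_iff] using hy
  have hA : (0:ℝ) < 1 - ‖x‖^2 := by nlinarith [norm_nonneg x]
  have hB : (0:ℝ) < 1 - ‖y‖^2 := by nlinarith [norm_nonneg y]
  have hD : (0:ℝ) < 1 - ‖a‖^2 := by nlinarith [norm_nonneg a]
  have hQxy : (0:ℝ) < 1 - 2 * (inner ℝ x y : ℝ) + ‖x‖ ^ 2 * ‖y‖ ^ 2 := by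
    rw [br_id]; positivity
  have hbrxy : 0 < br x y := Real.sqrt_pos.mpr hQxy
  have hsq : br x y ^ 2 = ‖x - y‖ ^ 2 + (1 - ‖x‖ ^ 2) * (1 - ‖y‖ ^ 2) := by
    rw [br, Real.sq_sqrt hQxy.le, br_id]
  have hne : ‖x - y‖ < δ * br x y := by
    rw [pd, div_lt_iff₀ hbrxy] at hpd; exact hpd
  have h2 : ‖x - y‖ ^ 2 ≤ c2 * ((1 - ‖x‖^2) * (1 - ‖y‖^2)) := by
    have h1 : ‖x - y‖ ^ 2 ≤ δ^2 * (‖x - y‖ ^ 2 + (1 - ‖x‖^2) * (1 - ‖y‖^2)) := by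
      nlinarith [norm_nonneg (x - y), hne, hsq, sq_nonneg (δ * br x y)]
    rw [hc2, div_mul_eq_mul_div, le_div_iff₀ hδ2]
    nlinarith
  -- A ≤ K B
  have habs : |‖x‖ - ‖y‖| ≤ ‖x - y‖ := abs_norm_sub_norm_le x y
  have hd2 : (‖x‖ - ‖y‖)^2 ≤ ‖x - y‖^2 := by
    rw [← sq_abs (‖x‖ - ‖y‖)]
    exact pow_le_pow_left₀ (abs_nonneg _) habs 2
  have hs4 : (‖x‖ + ‖y‖)^2 ≤ 4 := by nlinarith [norm_nonneg x, norm_nonneg y]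
  have key2 : (‖x‖ - ‖y‖)^2 * ((‖x‖ + ‖y‖)^2) ≤ ‖x - y‖^2 * 4 :=
    mul_le_mul hd2 hs4 (sq_nonneg _) (sq_nonneg _)
  have hABsq : ((1 - ‖x‖^2) - (1 - ‖y‖^2))^2 ≤ 4 * ‖x - y‖^2 := by nlinarith [key2]
  have hAB : 1 - ‖x‖^2 ≤ K * (1 - ‖y‖^2) := by
    have hA2 : (1 - ‖x‖^2)^2 ≤ K * ((1 - ‖x‖^2) * (1 - ‖y‖^2)) := by
      nlinarith
    nlinarith [mul_pos hA hB]
  -- B² ≤ 4 Qy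
  have hCS : (inner ℝ y a : ℝ) ≤ ‖y‖ * ‖a‖ := real_inner_le_norm y a
  have hb1 : (1 - ‖y‖*‖a‖)^2 ≤ 1 - 2 * (inner ℝ y a : ℝ) + ‖y‖ ^ 2 * ‖a‖ ^ 2 := by
    nlinarith [hCS]
  have hb2 : 1 - ‖y‖ ≤ 1 - ‖y‖*‖a‖ := by
    nlinarith [norm_nonneg y, norm_nonneg a]
  have hb3 : (1 - ‖y‖)^2 ≤ (1 - ‖y‖*‖a‖)^2 :=
    pow_le_pow_left₀ (by nlinarith) hb2 2
  have hb5 : (1 + ‖y‖)^2 ≤ 4 := by nlinarith [norm_nonneg y]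
  have hb4 : (1 - ‖y‖)^2 * (1 + ‖y‖)^2 ≤ (1 - ‖y‖*‖a‖)^2 * 4 :=
    mul_le_mul hb3 hb5 (by positivity) (sq_nonneg _)
  have hBsq : (1 - ‖y‖^2)^2 ≤ 4 * (1 - 2 * (inner ℝ y a : ℝ) + ‖y‖ ^ 2 * ‖a‖ ^ 2) := by
    nlinarith [hb1, hb4]
  -- triangle
  have htri : ‖x - a‖^2 ≤ 2 * ‖x - y‖^2 + 2 * ‖y - a‖^2 := by
    have h := norm_sub_le_norm_sub_add_norm_sub x y a
    nlinarith [sq_nonneg (‖x - y‖ - ‖y - a‖), norm_nonneg (x - a), norm_nonneg (x-y), norm_nonneg (y-a)]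
  -- combine
  set M : ℝ := 8 * c2 * K + K + 2 with hM
  have hMpos : (0:ℝ) < M := by positivity
  rw [br_id y a] at hBsq
  have key : 1 - 2 * (inner ℝ x a : ℝ) + ‖x‖ ^ 2 * ‖a‖ ^ 2
      ≤ M * (1 - 2 * (inner ℝ y a : ℝ) + ‖y‖ ^ 2 * ‖a‖ ^ 2) := by
    rw [br_id x a, br_id y a]
    exact arith_key c2 K M (1 - ‖x‖^2) (1 - ‖y‖^2) (1 - ‖a‖^2)
      (‖x - y‖^2) (‖x - a‖^2) (‖y - a‖^2) hc2pos hK hM hD.le hB.le h2 hAB hBsq htri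
      (sq_nonneg _)
  calc br x a ≤ Real.sqrt (M * (1 - 2 * (inner ℝ y a : ℝ) + ‖y‖ ^ 2 * ‖a‖ ^ 2)) :=
        Real.sqrt_le_sqrt key
    _ = Real.sqrt M * br y a := by rw [br, Real.sqrt_mul hMpos.le]

/-- For `0 < δ < 1` there is `C ≥ 1` (depending only on `δ`) such that for
all `a, x, y ∈ B` with `ρ(x,y) < δ`, `C⁻¹[y,a] ≤ [x,a] ≤ C[y,a]`. -/
theorem stmt2 (n : ℕ) (hn : 2 ≤ n) (δ : ℝ) (hδ0 : 0 < δ) (hδ1 : δ < 1) :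
    ∃ C : ℝ, 1 ≤ C ∧ ∀ a x y : E n, a ∈ Bset n → x ∈ Bset n → y ∈ Bset n →
      pd x y < δ → C⁻¹ * br y a ≤ br x a ∧ br x a ≤ C * br y a := by
  set c2 : ℝ := δ^2/(1-δ^2) with hc2
  have hδ2 : 0 < 1 - δ^2 := by nlinarith
  have hc2pos : 0 ≤ c2 := by positivity
  set M : ℝ := 8 * c2 * (2 + 4*c2) + (2 + 4*c2) + 2 with hM
  have hM1 : (1:ℝ) ≤ M := by nlinarith
  have hC1 : (1:ℝ) ≤ Real.sqrt M := by
    rw [show (1:ℝ) = Real.sqrt 1 by simp]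
    exact Real.sqrt_le_sqrt hM1
  refine ⟨Real.sqrt M, hC1, ?_⟩
  intro a x y ha hx hy hpd
  have hCpos : 0 < Real.sqrt M := lt_of_lt_of_le one_pos hC1
  constructor
  · rw [inv_mul_le_iff₀ hCpos]
    exact half δ hδ0 hδ1 a y x ha hy hx (by rwa [pd_symm])
  · exact half δ hδ0 hδ1 a x y ha hx hy hpd
end
end

section
/- Let n ≥ 2, B the open unit ball of ℝⁿ, α ∈ ℝ and 0 < δ < 1. There exists a constant C ≥ 1 (depending only on n, α, δ) such that for all x ∈ B: C⁻¹(1 − |x|²)^{α+n} ≤ ∫_{E_δ(x)} (1 − |y|²)^α dν(y) ≤ C(1 − |x|²)^{α+n}. -/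
open MeasureTheory Filter Set
open scoped ENNReal NNReal Topology

noncomputable section

lemma br_sq' {n : ℕ} (x y : E n) (hx : ‖x‖ < 1) (hy : ‖y‖ < 1) :
    br x y ^ 2 = (1 - ‖x‖ ^ 2) * (1 - ‖y‖ ^ 2) + ‖x - y‖ ^ 2 ∧ 0 < br x y := by
  have hx2 : ‖x‖ ^ 2 < 1 := by nlinarith [norm_nonneg x]
  have hy2 : ‖y‖ ^ 2 < 1 := by nlinarith [norm_nonneg y]
  have hns : ‖x - y‖ ^ 2 = ‖x‖ ^ 2 - 2 * (inner ℝ x y : ℝ) + ‖y‖ ^ 2 := norm_sub_sq_real x y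
  have hS : 0 < 1 - 2 * (inner ℝ x y : ℝ) + ‖x‖ ^ 2 * ‖y‖ ^ 2 := by
    nlinarith [sq_nonneg ‖x - y‖]
  constructor
  · rw [br, Real.sq_sqrt hS.le]; nlinarith []
  · exact Real.sqrt_pos.mpr hS

lemma pd_lt_iff {n : ℕ} (δ : ℝ) (x y : E n) (hx : ‖x‖ < 1) (hy : ‖y‖ < 1) (hδ0 : 0 < δ) :
    pd x y < δ ↔
      ‖x - y‖ ^ 2 * (1 - δ ^ 2) < δ ^ 2 * ((1 - ‖x‖ ^ 2) * (1 - ‖y‖ ^ 2)) := by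
  obtain ⟨hsq, hpos⟩ := br_sq' x y hx hy
  rw [pd, div_lt_iff₀ hpos]
  constructor
  · intro h
    have h2 : ‖x - y‖ ^ 2 < (δ * br x y) ^ 2 :=
      pow_lt_pow_left₀ h (norm_nonneg _) two_ne_zero
    nlinarith [h2, hsq]
  · intro h
    have h2 : ‖x - y‖ ^ 2 < (δ * br x y) ^ 2 := by nlinarith [hsq]
    exact lt_of_pow_lt_pow_left₀ 2 (by positivity) h2

lemma comparable {a b t q : ℝ} (ha : 0 < a) (hb : 0 < b) (ht : 0 < t)
    (hd : (a - b) ^ 2 ≤ 4 * q) (hq : q < t * a * b) : b ≤ (2 + 4 * t) * a := by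
  nlinarith [sq_nonneg a, sq_nonneg b, mul_pos ha hb, sq_nonneg (a - b)]

lemma rpow_comp {a b K α : ℝ} (ha : 0 < a) (hb : 0 < b) (hK : 1 ≤ K)
    (h1 : b ≤ K * a) (h2 : a ≤ K * b) : b ^ α ≤ K ^ |α| * a ^ α := by
  have hK0 : 0 < K := lt_of_lt_of_le one_pos hK
  rcases le_or_gt 0 α with hα | hα
  · rw [abs_of_nonneg hα]
    calc b ^ α ≤ (K * a) ^ α := Real.rpow_le_rpow hb.le h1 hα
      _ = K ^ α * a ^ α := Real.mul_rpow hK0.le ha.le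
  · rw [abs_of_neg hα]
    have hdiv : a / K ≤ b := (div_le_iff₀ hK0).mpr (by linarith)
    calc b ^ α ≤ (a / K) ^ α := Real.rpow_le_rpow_of_nonpos (by positivity) hdiv hα.le
      _ = a ^ α / K ^ α := Real.div_rpow ha.le hK0.le α
      _ = K ^ (-α) * a ^ α := by rw [Real.rpow_neg hK0.le, div_eq_mul_inv, mul_comm]

lemma nu_ball (n : ℕ) (x : E n) {r : ℝ} (hr : 0 < r) :
    nu n (Metric.ball x r) = ENNReal.ofReal (r ^ n) := by
  have h0 : volume (Bset n) ≠ 0 := (Metric.measure_ball_pos volume (0 : E n) one_pos).ne'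
  have htop : volume (Bset n) ≠ ∞ := measure_ball_lt_top.ne
  have hb : volume (Metric.ball x r)
      = ENNReal.ofReal (r ^ Module.finrank ℝ (E n)) * volume (Metric.ball (0 : E n) 1) :=
    Measure.addHaar_ball_of_pos volume x hr
  rw [nu, Measure.smul_apply, smul_eq_mul, hb, finrank_euclideanSpace_fin]
  rw [mul_comm (ENNReal.ofReal (r ^ n)), ← mul_assoc]
  rw [show volume (Metric.ball (0 : E n) 1) = volume (Bset n) from rfl]
  rw [ENNReal.inv_mul_cancel h0 htop, one_mul]

set_option maxHeartbeats 2000000 in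
/-- For `α ∈ ℝ` and `0 < δ < 1` there is `C ≥ 1` such that for all `x ∈ B`,
`C⁻¹(1 − |x|²)^{α+n} ≤ ∫_{E_δ(x)} (1 − |y|²)^α dν(y) ≤ C(1 − |x|²)^{α+n}`. -/
theorem stmt4 (n : ℕ) (hn : 2 ≤ n) (α δ : ℝ) (hδ0 : 0 < δ) (hδ1 : δ < 1) :
    ∃ C : ℝ, 1 ≤ C ∧ ∀ x ∈ Bset n,
      C⁻¹ * (1 - ‖x‖ ^ 2) ^ (α + n) ≤ (∫ y in Eball δ x, (1 - ‖y‖ ^ 2) ^ α ∂(nu n)) ∧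
      (∫ y in Eball δ x, (1 - ‖y‖ ^ 2) ^ α ∂(nu n)) ≤ C * (1 - ‖x‖ ^ 2) ^ (α + n) := by
  have h1δ : 0 < 1 - δ ^ 2 := by nlinarith
  set t : ℝ := δ ^ 2 / (1 - δ ^ 2) with ht_def
  have ht : 0 < t := by positivity
  have hts : t * (1 - δ ^ 2) = δ ^ 2 := div_mul_cancel₀ _ h1δ.ne'
  set K : ℝ := 2 + 4 * t with hK_def
  have hK1 : 1 ≤ K := by nlinarith
  have hK0 : 0 < K := by nlinarith
  set c₀ : ℝ := min (1/4) (Real.sqrt t / 2) with hc0_def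
  have hc0 : 0 < c₀ := lt_min (by norm_num) (by positivity)
  have hc014 : c₀ ≤ 1/4 := min_le_left _ _
  have hc0sq : c₀ ^ 2 ≤ t / 4 := by
    have h1 : c₀ ≤ Real.sqrt t / 2 := min_le_right _ _
    have h2 : c₀ ^ 2 ≤ (Real.sqrt t / 2) ^ 2 := pow_le_pow_left₀ hc0.le h1 2
    rw [div_pow, Real.sq_sqrt ht.le] at h2; linarith
  set R : ℝ := Real.sqrt (t * K) with hR_def
  have hR : 0 < R := Real.sqrt_pos.mpr (by positivity)
  have hRsq : R ^ 2 = t * K := Real.sq_sqrt (by positivity)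
  set M : ℝ := K ^ |α| with hM_def
  have hM1 : 1 ≤ M := Real.one_le_rpow hK1 (abs_nonneg α)
  have hM0 : 0 < M := lt_of_lt_of_le one_pos hM1
  have hc0n : (0:ℝ) < c₀ ^ n := by positivity
  set C : ℝ := max 1 (max (M * R ^ n) (M / c₀ ^ n)) with hC_def
  have hC1 : 1 ≤ C := le_max_left _ _
  have hC0 : 0 < C := lt_of_lt_of_le one_pos hC1
  refine ⟨C, hC1, fun x hx => ?_⟩
  have hx' : ‖x‖ < 1 := by simpa [Bset, mem_ball_zero_iff] using hx
  set a : ℝ := 1 - ‖x‖ ^ 2 with ha_def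
  have ha : 0 < a := by nlinarith [norm_nonneg x]
  -- the set S
  set S : Set (E n) :=
    {y : E n | ‖y‖ < 1 ∧ ‖x - y‖ ^ 2 * (1 - δ ^ 2) < δ ^ 2 * (a * (1 - ‖y‖ ^ 2))} with hS_def
  have hE : Eball δ x = S := by
    ext y
    simp only [Eball, Bset, mem_ball_zero_iff, Set.mem_setOf_eq, hS_def, ha_def]
    exact and_congr_right fun hy => pd_lt_iff δ x y hx' hy hδ0
  have hmeas : MeasurableSet S := by
    rw [hS_def, Set.setOf_and]
    exact (measurableSet_lt (by fun_prop) measurable_const).inter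
      (measurableSet_lt (by fun_prop) (by fun_prop))
  -- key facts for y ∈ S
  have hkey : ∀ y ∈ S, 0 < 1 - ‖y‖ ^ 2 ∧ ‖x - y‖ ^ 2 < t * a * (1 - ‖y‖ ^ 2) ∧
      (1 - ‖y‖ ^ 2) ≤ K * a ∧ a ≤ K * (1 - ‖y‖ ^ 2) := by
    rintro y ⟨hy1, hy2⟩
    have hb : 0 < 1 - ‖y‖ ^ 2 := by nlinarith [norm_nonneg y]
    set b : ℝ := 1 - ‖y‖ ^ 2 with hb_def
    have hq : ‖x - y‖ ^ 2 < t * a * b := by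
      have heq : δ ^ 2 * (a * b) = (t * a * b) * (1 - δ ^ 2) := by
        linear_combination (a * b) * hts.symm
      have h2 : ‖x - y‖ ^ 2 * (1 - δ ^ 2) < (t * a * b) * (1 - δ ^ 2) := by
        rw [← heq]; exact hy2
      exact (mul_lt_mul_iff_left₀ h1δ).mp h2
    have h1 : |‖y‖ - ‖x‖| ≤ ‖x - y‖ := by
      rw [show ‖x - y‖ = ‖y - x‖ from (norm_sub_rev x y)]
      exact abs_norm_sub_norm_le y x
    have h1' : (‖y‖ - ‖x‖) ^ 2 ≤ ‖x - y‖ ^ 2 :=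
      sq_le_sq' (neg_le_of_abs_le h1) (le_of_abs_le h1)
    have h4 : (‖y‖ + ‖x‖) ^ 2 ≤ 4 := by nlinarith [norm_nonneg x, norm_nonneg y]
    have hmm : (‖y‖ - ‖x‖) ^ 2 * (‖y‖ + ‖x‖) ^ 2 ≤ ‖x - y‖ ^ 2 * 4 :=
      mul_le_mul h1' h4 (sq_nonneg _) (sq_nonneg _)
    have hd : (a - b) ^ 2 ≤ 4 * ‖x - y‖ ^ 2 := by
      have : (a - b) ^ 2 = (‖y‖ - ‖x‖) ^ 2 * (‖y‖ + ‖x‖) ^ 2 := by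
        rw [ha_def, hb_def]; ring
      linarith [hmm, this.ge, this.le]
    have hd' : (b - a) ^ 2 ≤ 4 * ‖x - y‖ ^ 2 := by rw [← neg_sub, neg_sq]; exact hd
    have hq' : ‖x - y‖ ^ 2 < t * b * a := by
      rw [show t * b * a = t * a * b by ring]; exact hq
    exact ⟨hb, hq, comparable ha hb ht hd hq, comparable hb ha ht hd' hq'⟩
  -- inclusion: S ⊆ ball x (R * a)
  have hsub1 : S ⊆ Metric.ball x (R * a) := by
    intro y hy
    obtain ⟨hb, hq, hbK, _⟩ := hkey y hy
    have h2 : ‖x - y‖ ^ 2 < (R * a) ^ 2 := by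
      have h5 : t * a * (1 - ‖y‖ ^ 2) ≤ t * a * (K * a) :=
        mul_le_mul_of_nonneg_left hbK (mul_pos ht ha).le
      calc ‖x - y‖ ^ 2 < t * a * (1 - ‖y‖ ^ 2) := hq
        _ ≤ t * a * (K * a) := h5
        _ = (R * a) ^ 2 := by rw [mul_pow, hRsq]; ring
    have h3 : ‖x - y‖ < R * a := lt_of_pow_lt_pow_left₀ 2 (by positivity) h2
    rw [Metric.mem_ball, dist_eq_norm, show ‖y - x‖ = ‖x - y‖ from norm_sub_rev y x]
    exact h3
  -- inclusion: ball x (c₀ * a) ⊆ S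
  have hsub2 : Metric.ball x (c₀ * a) ⊆ S := by
    intro y hy
    have hdist : ‖x - y‖ < c₀ * a := by
      rw [Metric.mem_ball, dist_eq_norm] at hy
      rw [show ‖x - y‖ = ‖y - x‖ from norm_sub_rev x y]; exact hy
    have hyx : ‖y‖ - ‖x‖ ≤ ‖x - y‖ := by
      rw [show ‖x - y‖ = ‖y - x‖ from norm_sub_rev x y]
      exact norm_sub_norm_le y x
    have hca : c₀ * a ≤ a / 4 := by nlinarith [ha]
    have h3x : (0:ℝ) < (1 - ‖x‖) * (3 - ‖x‖) :=
      mul_pos (by linarith) (by nlinarith [norm_nonneg x])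
    have hy1 : ‖y‖ < 1 := by nlinarith [norm_nonneg x, hx', hdist, hyx, hca, h3x]
    have hb : 0 < 1 - ‖y‖ ^ 2 := by nlinarith [norm_nonneg y]
    have hblow : a ≤ 4 * (1 - ‖y‖ ^ 2) := by
      nlinarith [norm_nonneg x, norm_nonneg y, hx', hy1, hdist, hyx, hca]
    refine ⟨hy1, ?_⟩
    have hq : ‖x - y‖ ^ 2 < t * a * (1 - ‖y‖ ^ 2) := by
      have hp : ‖x - y‖ ^ 2 < (c₀ * a) ^ 2 :=
        pow_lt_pow_left₀ hdist (norm_nonneg _) two_ne_zero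
      have h5 : (t/4) * (a * a) ≤ (t/4) * (a * (4 * (1 - ‖y‖ ^ 2))) :=
        mul_le_mul_of_nonneg_left (mul_le_mul_of_nonneg_left hblow ha.le)
          (by positivity : (0:ℝ) ≤ t/4)
      calc ‖x - y‖ ^ 2 < (c₀ * a) ^ 2 := hp
        _ = c₀ ^ 2 * a ^ 2 := by ring
        _ ≤ (t/4) * a ^ 2 := mul_le_mul_of_nonneg_right hc0sq (sq_nonneg a)
        _ = (t/4) * (a * a) := by ring
        _ ≤ (t/4) * (a * (4 * (1 - ‖y‖ ^ 2))) := h5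
        _ = t * a * (1 - ‖y‖ ^ 2) := by ring
    have h7 : ‖x - y‖ ^ 2 * (1 - δ ^ 2) < (t * a * (1 - ‖y‖ ^ 2)) * (1 - δ ^ 2) :=
      (mul_lt_mul_iff_left₀ h1δ).mpr hq
    have h8 : (t * a * (1 - ‖y‖ ^ 2)) * (1 - δ ^ 2) = δ ^ 2 * (a * (1 - ‖y‖ ^ 2)) := by
      linear_combination (a * (1 - ‖y‖ ^ 2)) * hts
    linarith
  -- measure bounds
  have hνup : nu n S ≤ ENNReal.ofReal ((R * a) ^ n) := by
    rw [← nu_ball n x (mul_pos hR ha)]; exact measure_mono hsub1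
  have hνfin : nu n S ≠ ∞ := ne_top_of_le_ne_top ENNReal.ofReal_ne_top hνup
  have hνlo : ENNReal.ofReal ((c₀ * a) ^ n) ≤ nu n S := by
    rw [← nu_ball n x (mul_pos hc0 ha)]; exact measure_mono hsub2
  -- the integrand
  set f : E n → ℝ := fun y => (1 - ‖y‖ ^ 2) ^ α with hf_def
  have hbound : ∀ y ∈ S, M⁻¹ * a ^ α ≤ f y ∧ f y ≤ M * a ^ α := by
    intro y hy
    obtain ⟨hb, _, hbK, haK⟩ := hkey y hy
    constructor
    · rw [inv_mul_le_iff₀ hM0]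
      -- a ^ α ≤ M * (1 - ‖y‖^2) ^ α
      exact le_trans (rpow_comp hb ha hK1 haK hbK) (le_refl _)
    · exact rpow_comp ha hb hK1 hbK haK
  have hfm : Measurable f := by fun_prop
  have hfbd : ∀ᵐ y ∂((nu n).restrict S), ‖f y‖ ≤ M * a ^ α := by
    refine (ae_restrict_iff' hmeas).mpr (ae_of_all _ fun y hy => ?_)
    obtain ⟨hlo, hhi⟩ := hbound y hy
    have hpos : 0 < f y := lt_of_lt_of_le (by positivity) hlo
    rw [Real.norm_eq_abs, abs_of_pos hpos]; exact hhi
  have hfint : IntegrableOn f S (nu n) :=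
    Measure.integrableOn_of_bounded hνfin hfm.aestronglyMeasurable hfbd
  -- rewrite integral over S
  rw [hE]
  have hpow : a ^ (α + (n:ℝ)) = a ^ α * a ^ n := by rw [Real.rpow_add ha, Real.rpow_natCast]
  have haα : (0:ℝ) < a ^ α := Real.rpow_pos_of_pos ha α
  constructor
  · -- lower bound
    have hball : IntegrableOn f (Metric.ball x (c₀ * a)) (nu n) := hfint.mono_set hsub2
    have hconst : IntegrableOn (fun _ => M⁻¹ * a ^ α) (Metric.ball x (c₀ * a)) (nu n) := by
      apply (integrableOn_const_iff).mpr
      right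
      rw [nu_ball n x (mul_pos hc0 ha)]
      exact ENNReal.ofReal_lt_top
    have h1 : ∫ _ in Metric.ball x (c₀ * a), (M⁻¹ * a ^ α) ∂(nu n)
        ≤ ∫ y in Metric.ball x (c₀ * a), f y ∂(nu n) :=
      setIntegral_mono_on hconst hball Metric.isOpen_ball.measurableSet
        (fun y hy => (hbound y (hsub2 hy)).1)
    have h2 : ∫ y in Metric.ball x (c₀ * a), f y ∂(nu n) ≤ ∫ y in S, f y ∂(nu n) := by
      apply setIntegral_mono_set hfint
      · refine (ae_restrict_iff' hmeas).mpr (ae_of_all _ fun y hy => ?_)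
        exact le_of_lt (lt_of_lt_of_le (by positivity) (hbound y hy).1)
      · exact HasSubset.Subset.eventuallyLE hsub2
    have h3 : ∫ _ in Metric.ball x (c₀ * a), (M⁻¹ * a ^ α) ∂(nu n)
        = (c₀ * a) ^ n * (M⁻¹ * a ^ α) := by
      rw [setIntegral_const, measureReal_def, nu_ball n x (mul_pos hc0 ha),
        ENNReal.toReal_ofReal (by positivity), smul_eq_mul]
    have h4 : C⁻¹ * a ^ (α + (n:ℝ)) ≤ (c₀ * a) ^ n * (M⁻¹ * a ^ α) := by
      have hCl : M / c₀ ^ n ≤ C := le_trans (le_max_right _ _) (le_max_right _ _)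
      have hMc : 0 < M / c₀ ^ n := by positivity
      have hinv : C⁻¹ ≤ (M / c₀ ^ n)⁻¹ := inv_anti₀ hMc hCl
      have heq : (c₀ * a) ^ n * (M⁻¹ * a ^ α) = (M / c₀ ^ n)⁻¹ * a ^ (α + (n:ℝ)) := by
        rw [hpow, mul_pow]; field_simp
      rw [heq]
      exact mul_le_mul_of_nonneg_right hinv (by positivity)
    calc C⁻¹ * a ^ (α + (n:ℝ)) ≤ (c₀ * a) ^ n * (M⁻¹ * a ^ α) := h4
      _ = ∫ _ in Metric.ball x (c₀ * a), (M⁻¹ * a ^ α) ∂(nu n) := h3.symm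
      _ ≤ ∫ y in Metric.ball x (c₀ * a), f y ∂(nu n) := h1
      _ ≤ ∫ y in S, f y ∂(nu n) := h2
  · -- upper bound
    have hconst : IntegrableOn (fun _ => M * a ^ α) S (nu n) :=
      (integrableOn_const_iff).mpr (Or.inr hνfin.lt_top)
    have h1 : ∫ y in S, f y ∂(nu n) ≤ ∫ _ in S, (M * a ^ α) ∂(nu n) :=
      setIntegral_mono_on hfint hconst hmeas (fun y hy => (hbound y hy).2)
    have h2 : ∫ _ in S, (M * a ^ α) ∂(nu n) = (nu n S).toReal * (M * a ^ α) := by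
      rw [setIntegral_const, smul_eq_mul, measureReal_def]
    have h3 : (nu n S).toReal ≤ (R * a) ^ n :=
      ENNReal.toReal_le_of_le_ofReal (by positivity) hνup
    have h4 : (nu n S).toReal * (M * a ^ α) ≤ (R * a) ^ n * (M * a ^ α) :=
      mul_le_mul_of_nonneg_right h3 (by positivity)
    have h5 : (R * a) ^ n * (M * a ^ α) ≤ C * a ^ (α + (n:ℝ)) := by
      have hCu : M * R ^ n ≤ C := le_trans (le_max_left _ _) (le_max_right _ _)
      have heq : (R * a) ^ n * (M * a ^ α) = (M * R ^ n) * a ^ (α + (n:ℝ)) := by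
        rw [hpow, mul_pow]; ring
      rw [heq]
      exact mul_le_mul_of_nonneg_right hCu (by positivity)
    calc ∫ y in S, f y ∂(nu n) ≤ ∫ _ in S, (M * a ^ α) ∂(nu n) := h1
      _ = (nu n S).toReal * (M * a ^ α) := h2
      _ ≤ (R * a) ^ n * (M * a ^ α) := h4
      _ ≤ C * a ^ (α + (n:ℝ)) := h5
end
end
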